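/- For every real x, the complex series ∑_{n=1}^∞ (xⁿ/n) · ( 1/(x+i)ⁿ − 1/(x−i)ⁿ ) converges and (i/2) times its sum equals arctan(x) (viewed as a complex number). -/

import Mathlib

open Complex in
theorem arctan_complex_series (x : ℝ) :
    Summable (fun n : ℕ =>
      ((x : ℂ) ^ (n + 1) / ((n : ℂ) + 1)) *
        (1 / ((x : ℂ) + I) ^ (n + 1) - 1 / ((x : ℂ) - I) ^ (n + 1))) ∧
    I / 2 * ∑' n : ℕ,
      ((x : ℂ) ^ (n + 1) / ((n : ℂ) + 1)) *
        (1 / ((x : ℂ) + I) ^ (n + 1) - 1 / ((x : ℂ) - I) ^ (n + 1))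
      = (Real.arctan x : ℂ) := by
  have hxi : (x : ℂ) + I ≠ 0 := by
    intro h
    have := congrArg Complex.im h
    simp at this
  have hxi' : (x : ℂ) - I ≠ 0 := by
    intro h
    have := congrArg Complex.im h
    simp at this
  have hx2 : (0:ℝ) < x ^ 2 + 1 := by positivity
  set z : ℂ := (x : ℂ) / ((x : ℂ) + I) with hz
  set w : ℂ := (x : ℂ) / ((x : ℂ) - I) with hw
  have habs : ∀ u : ℂ, u.im ≠ 0 → ‖(x : ℂ) / u‖ < 1 → True := fun _ _ _ => trivial
  have hnz : ‖z‖ < 1 := by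
    rw [hz, norm_div, div_lt_one (norm_pos_iff.mpr hxi)]
    have h1 : ‖(x : ℂ)‖ = Real.sqrt (x ^ 2) := by
      simp [Real.sqrt_sq_eq_abs]
    have h2 : ‖(x : ℂ) + I‖ = Real.sqrt (x ^ 2 + 1) := by
      rw [Complex.norm_def, Complex.normSq_apply]
      simp
      ring_nf
    rw [h1, h2]
    exact Real.sqrt_lt_sqrt (by positivity) (by linarith)
  have hnw : ‖w‖ < 1 := by
    rw [hw, norm_div, div_lt_one (norm_pos_iff.mpr hxi')]
    have h1 : ‖(x : ℂ)‖ = Real.sqrt (x ^ 2) := by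
      simp [Real.sqrt_sq_eq_abs]
    have h2 : ‖(x : ℂ) - I‖ = Real.sqrt (x ^ 2 + 1) := by
      rw [Complex.norm_def, Complex.normSq_apply]
      simp
      ring_nf
    rw [h1, h2]
    exact Real.sqrt_lt_sqrt (by positivity) (by linarith)
  have hs1 : HasSum (fun n : ℕ => z ^ (n + 1) / ((n : ℂ) + 1)) (-Complex.log (1 - z)) := by
    have h := Complex.hasSum_taylorSeries_neg_log hnz
    have : HasSum (fun n : ℕ => z ^ (n + 1) / (((n + 1 : ℕ) : ℂ)))
        (-Complex.log (1 - z)) :=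
      (hasSum_nat_add_iff (f := fun n : ℕ => z ^ n / (n : ℂ)) 1).mpr (by simpa using h)
    convert this using 2 with n
    push_cast
    ring
  have hs2 : HasSum (fun n : ℕ => w ^ (n + 1) / ((n : ℂ) + 1)) (-Complex.log (1 - w)) := by
    have h := Complex.hasSum_taylorSeries_neg_log hnw
    have : HasSum (fun n : ℕ => w ^ (n + 1) / (((n + 1 : ℕ) : ℂ)))
        (-Complex.log (1 - w)) :=
      (hasSum_nat_add_iff (f := fun n : ℕ => w ^ n / (n : ℂ)) 1).mpr (by simpa using h)
    convert this using 2 with n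
    push_cast
    ring
  have hsum : HasSum (fun n : ℕ =>
      ((x : ℂ) ^ (n + 1) / ((n : ℂ) + 1)) *
        (1 / ((x : ℂ) + I) ^ (n + 1) - 1 / ((x : ℂ) - I) ^ (n + 1)))
      (-Complex.log (1 - z) - -Complex.log (1 - w)) := by
    refine (hs1.sub hs2).congr_fun fun n => ?_
    rw [hz, hw, div_pow, div_pow]
    ring
  refine ⟨hsum.summable, ?_⟩
  rw [hsum.tsum_eq]
  -- rewrite the logs
  have e1 : 1 - z = (((x ^ 2 + 1 : ℝ) : ℂ))⁻¹ * (1 + x * I) := by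
    rw [hz]
    have hC : ((x:ℂ) ^ 2 + 1) ≠ 0 := by
      exact_mod_cast (by positivity : (x:ℝ) ^ 2 + 1 ≠ 0)
    push_cast
    field_simp
    linear_combination (-(x : ℂ)) * Complex.I_sq
  have e2 : 1 - w = (((x ^ 2 + 1 : ℝ) : ℂ))⁻¹ * (1 - x * I) := by
    rw [hw]
    have hC : ((x:ℂ) ^ 2 + 1) ≠ 0 := by
      exact_mod_cast (by positivity : (x:ℝ) ^ 2 + 1 ≠ 0)
    push_cast
    field_simp
    linear_combination (-(x : ℂ)) * Complex.I_sq
  have h1p : (1 + (x : ℂ) * I) ≠ 0 := by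
    intro h
    have := congrArg Complex.re h
    simp at this
  have h1m : (1 - (x : ℂ) * I) ≠ 0 := by
    intro h
    have := congrArg Complex.re h
    simp at this
  have hinv : ((x ^ 2 + 1 : ℝ))⁻¹ > 0 := by positivity
  have l1 : Complex.log (1 - z) = ((Real.log (x ^ 2 + 1)⁻¹ : ℝ) : ℂ) + Complex.log (1 + x * I) := by
    rw [e1, ← Complex.ofReal_inv, Complex.log_ofReal_mul hinv h1p]
  have l2 : Complex.log (1 - w) = ((Real.log (x ^ 2 + 1)⁻¹ : ℝ) : ℂ) + Complex.log (1 - x * I) := by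
    rw [e2, ← Complex.ofReal_inv, Complex.log_ofReal_mul hinv h1m]
  rw [l1, l2]
  have hconj : Complex.log (1 - (x : ℂ) * I) = starRingEnd ℂ (Complex.log (1 + x * I)) := by
    have harg : (1 + (x : ℂ) * I).arg ≠ Real.pi := by
      intro h
      rw [Complex.arg_eq_pi_iff] at h
      simp at h
      linarith [h.1]
    rw [← Complex.log_conj _ harg]
    congr 1
    simp [Complex.ext_iff]
  rw [hconj]
  set L := Complex.log (1 + (x : ℂ) * I) with hL
  have him : L.im = Real.arctan x := by
    rw [hL, Complex.log_im, Complex.arg_of_re_nonneg (by simp)]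
    have habs : ‖(1 + (x : ℂ) * I)‖ = Real.sqrt (1 + x ^ 2) := by
      rw [Complex.norm_def, Complex.normSq_apply]
      simp
      ring_nf
    rw [habs]
    simp only [Complex.add_im, Complex.one_im, Complex.mul_im, Complex.ofReal_re,
      Complex.I_im, Complex.ofReal_im, Complex.I_re]
    rw [Real.arctan_eq_arcsin]
    norm_num
  have : -(((Real.log (x ^ 2 + 1)⁻¹ : ℝ) : ℂ) + L) - -(((Real.log (x ^ 2 + 1)⁻¹ : ℝ) : ℂ) + starRingEnd ℂ L) = starRingEnd ℂ L - L := by ring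
  rw [this]
  have hsub : starRingEnd ℂ L - L = -(((2 * L.im : ℝ) : ℂ) * I) := by
    rw [← Complex.sub_conj]
    ring
  rw [hsub, him, Complex.ofReal_mul, Complex.ofReal_ofNat]
  linear_combination (-(Real.arctan x : ℂ)) * Complex.I_sq
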